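/- Let m ≥ 2, let A be an m×m primitive binary matrix, and let q ≥ 2 be an integer. Then there exists a unique vector (t_0,…,t_{m−1}) with all entries positive real numbers satisfying t_i^q = Σ_{j=0}^{m−1} A(i,j) t_j for all 0 ≤ i ≤ m−1. -/

import Mathlib

open Filter Topology

/-- Sequences over the alphabet `{0,…,m−1}`; coordinate `n` represents position `n+1`. -/
def ASeq (m : ℕ) : Type := ℕ → Fin m

open Classical in
/-- The distance `d(x,y) = m^{-min{i ≥ 1 : x_i ≠ y_i}}` on `Σ_m^ℕ`
(in the 0-based representation, `min{i ≥ 1 : x_i ≠ y_i} = firstDiff x y + 1`). -/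
noncomputable def aseqDist (m : ℕ) (x y : ASeq m) : ℝ :=
  if x = y then 0 else ((m : ℝ)⁻¹) ^ (PiNat.firstDiff x y + 1)

lemma aseqDist_self (m : ℕ) (x : ASeq m) : aseqDist m x x = 0 := by
  simp [aseqDist]

lemma aseqDist_comm (m : ℕ) (x y : ASeq m) : aseqDist m x y = aseqDist m y x := by
  unfold aseqDist
  by_cases h : x = y
  · simp [h]
  · rw [if_neg h, if_neg (Ne.symm h)]
    congr 2
    exact PiNat.firstDiff_comm (E := fun _ => Fin m) x y

lemma aseqDist_triangle (m : ℕ) (x y z : ASeq m) :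
    aseqDist m x z ≤ aseqDist m x y + aseqDist m y z := by
  classical
  unfold aseqDist
  rcases Nat.eq_zero_or_pos m with hm | hm
  · subst hm; exact (x 0).elim0
  have hr0 : (0:ℝ) ≤ (m : ℝ)⁻¹ := by positivity
  have hr1 : (m : ℝ)⁻¹ ≤ 1 := by
    rw [inv_le_one_iff₀]; right; exact_mod_cast hm
  by_cases hxz : x = z
  · rw [if_pos hxz]
    have h1 : (0:ℝ) ≤ if x = y then 0 else ((m : ℝ)⁻¹) ^ (PiNat.firstDiff x y + 1) := by
      split <;> positivity
    have h2 : (0:ℝ) ≤ if y = z then 0 else ((m : ℝ)⁻¹) ^ (PiNat.firstDiff y z + 1) := by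
      split <;> positivity
    linarith
  · rw [if_neg hxz]
    by_cases hxy : x = y
    · subst hxy; rw [if_pos rfl, if_neg hxz]; simp
    by_cases hyz : y = z
    · subst hyz; rw [if_pos rfl, if_neg hxz]; simp
    rw [if_neg hxy, if_neg hyz]
    have hmin := PiNat.min_firstDiff_le x y z hxz
    have hpos1 : (0:ℝ) ≤ ((m : ℝ)⁻¹) ^ (PiNat.firstDiff x y + 1) := by positivity
    have hpos2 : (0:ℝ) ≤ ((m : ℝ)⁻¹) ^ (PiNat.firstDiff y z + 1) := by positivity
    rcases le_total (PiNat.firstDiff x y) (PiNat.firstDiff y z) with hcmp | hcmp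
    · have : ((m : ℝ)⁻¹) ^ (PiNat.firstDiff x z + 1) ≤
          ((m : ℝ)⁻¹) ^ (PiNat.firstDiff x y + 1) := by
        apply pow_le_pow_of_le_one hr0 hr1
        simp only [min_eq_left hcmp] at hmin; omega
      linarith
    · have : ((m : ℝ)⁻¹) ^ (PiNat.firstDiff x z + 1) ≤
          ((m : ℝ)⁻¹) ^ (PiNat.firstDiff y z + 1) := by
        apply pow_le_pow_of_le_one hr0 hr1
        simp only [min_eq_right hcmp] at hmin; omega
      linarith

lemma aseqDist_eq_zero (m : ℕ) (x y : ASeq m) (h : aseqDist m x y = 0) : x = y := by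
  by_contra hxy
  unfold aseqDist at h
  rw [if_neg hxy] at h
  rcases Nat.eq_zero_or_pos m with hm | hm
  · subst hm; exact (x 0).elim0
  have : (0:ℝ) < ((m : ℝ)⁻¹) ^ (PiNat.firstDiff x y + 1) := by positivity
  linarith

noncomputable instance ASeq.metricSpace (m : ℕ) : MetricSpace (ASeq m) where
  dist := aseqDist m
  dist_self := aseqDist_self m
  dist_comm := aseqDist_comm m
  dist_triangle := aseqDist_triangle m
  eq_of_dist_eq_zero := aseqDist_eq_zero m _ _


/-- For a primitive binary matrix `A` and `q ≥ 2` there is a unique vector `t` with all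
entries positive such that `t_i^q = Σ_j A(i,j) t_j` for all `i`. -/
theorem exists_unique_positive_solution
    (m : ℕ) (hm : 2 ≤ m) (A : Matrix (Fin m) (Fin m) ℕ)
    (hbin : ∀ i j, A i j ≤ 1)
    (hprim : ∃ n : ℕ, 1 ≤ n ∧ ∀ i j : Fin m, 0 < (A ^ n) i j)
    (q : ℕ) (hq : 2 ≤ q) :
    ∃! t : Fin m → ℝ,
      (∀ i, 0 < t i) ∧ ∀ i, t i ^ q = ∑ j, (A i j : ℝ) * t j := by
  
  classical
  have hq0 : (q:ℝ) ≠ 0 := by positivity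
  have hq1 : 1 < q := by omega
  -- every row of A has a positive entry
  obtain ⟨n, hn1, hA⟩ := hprim
  have hrow : ∀ i : Fin m, ∃ j, 0 < A i j := by
    intro i
    by_contra h
    push_neg at h
    have hzero : ∀ j, A i j = 0 := fun j => Nat.le_zero.mp (h j)
    obtain ⟨k, rfl⟩ : ∃ k, n = k + 1 := ⟨n - 1, by omega⟩
    have : (A ^ (k + 1)) i i = 0 := by
      rw [pow_succ', Matrix.mul_apply]
      exact Finset.sum_eq_zero fun j _ => by simp [hzero j]
    exact absurd (hA i i) (by simp [this])
  -- the sum operator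
  set S : (Fin m → ℝ) → Fin m → ℝ := fun t i => ∑ j, (A i j : ℝ) * t j with hS
  have hS_ge_one : ∀ t : Fin m → ℝ, (∀ j, 1 ≤ t j) → ∀ i, 1 ≤ S t i := by
    intro t ht i
    obtain ⟨j0, hj0⟩ := hrow i
    have h1 : (1:ℝ) ≤ (A i j0 : ℝ) * t j0 := by
      have : (1:ℝ) ≤ (A i j0 : ℝ) := by exact_mod_cast hj0
      nlinarith [ht j0]
    calc (1:ℝ) ≤ (A i j0 : ℝ) * t j0 := h1
      _ ≤ S t i := Finset.single_le_sum (f := fun j => (A i j : ℝ) * t j) (fun j _ =>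
            mul_nonneg (by positivity) (zero_le_one.trans (ht j))) (Finset.mem_univ j0)
  have hS_mono : ∀ t s : Fin m → ℝ, (∀ j, t j ≤ s j) → ∀ i, S t i ≤ S s i := by
    intro t s hts i
    apply Finset.sum_le_sum
    intro j _
    have : (0:ℝ) ≤ (A i j : ℝ) := by positivity
    nlinarith [hts j]
  have hS_le : ∀ t : Fin m → ℝ, (∀ j, 0 ≤ t j) → (∀ j, t j ≤ m) → ∀ i,
      S t i ≤ (m:ℝ) ^ q := by
    intro t h0 ht i
    have h1 : S t i ≤ ∑ j : Fin m, (m:ℝ) := by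
      apply Finset.sum_le_sum
      intro j _
      have hb : (A i j : ℝ) ≤ 1 := by exact_mod_cast hbin i j
      have h01 : (0:ℝ) ≤ (A i j : ℝ) := by positivity
      nlinarith [ht j, h0 j]
    have h2 : (∑ _j : Fin m, (m:ℝ)) = (m:ℝ) * m := by
      simp [Finset.sum_const, mul_comm]
    have h3 : (m:ℝ) * m ≤ (m:ℝ) ^ q := by
      have : (m:ℝ) * m = (m:ℝ) ^ 2 := by ring
      rw [this]
      apply pow_le_pow_right₀ (by exact_mod_cast Nat.one_le_of_lt hm) hq
    linarith
  -- the iteration map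
  set F : (Fin m → ℝ) → Fin m → ℝ := fun t i => (S t i) ^ ((q:ℝ)⁻¹) with hF
  have hpowQ : ∀ x : ℝ, 0 ≤ x → (x ^ ((q:ℝ)⁻¹)) ^ q = x := by
    intro x hx
    rw [← Real.rpow_natCast (x ^ ((q:ℝ)⁻¹)) q, ← Real.rpow_mul hx,
      inv_mul_cancel₀ hq0, Real.rpow_one]
  set u : ℕ → Fin m → ℝ := fun n => F^[n] (fun _ => 1) with hu
  have hu_succ : ∀ n, u (n + 1) = F (u n) := by
    intro n; simp [hu, Function.iterate_succ_apply']
  -- combined induction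
  have key : ∀ n, (∀ i, 1 ≤ u n i) ∧ (∀ i, u n i ≤ m) ∧ (∀ i, u n i ≤ u (n + 1) i) := by
    have hm1 : (1:ℝ) ≤ (m:ℝ) := by exact_mod_cast hm.trans' (by norm_num)
    have hF_ge : ∀ t : Fin m → ℝ, (∀ j, 1 ≤ t j) → ∀ i, 1 ≤ F t i := by
      intro t ht i
      have h1 := hS_ge_one t ht i
      calc (1:ℝ) = (1:ℝ) ^ ((q:ℝ)⁻¹) := (Real.one_rpow _).symm
        _ ≤ (S t i) ^ ((q:ℝ)⁻¹) := Real.rpow_le_rpow zero_le_one h1 (by positivity)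
    have hF_le : ∀ t : Fin m → ℝ, (∀ j, 0 ≤ t j) → (∀ j, t j ≤ m) → ∀ i, F t i ≤ m := by
      intro t h0 ht i
      have h1 := hS_le t h0 ht i
      have hS0 : 0 ≤ S t i := by
        apply Finset.sum_nonneg; intro j _
        have : (0:ℝ) ≤ (A i j : ℝ) := by positivity
        nlinarith [h0 j]
      calc F t i = (S t i) ^ ((q:ℝ)⁻¹) := rfl
        _ ≤ ((m:ℝ) ^ q) ^ ((q:ℝ)⁻¹) := Real.rpow_le_rpow hS0 h1 (by positivity)
        _ = (m:ℝ) := by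
            rw [← Real.rpow_natCast (m:ℝ) q, ← Real.rpow_mul (by positivity),
              mul_inv_cancel₀ hq0, Real.rpow_one]
    have hF_mono : ∀ t s : Fin m → ℝ, (∀ j, 0 ≤ t j) → (∀ j, t j ≤ s j) → ∀ i,
        F t i ≤ F s i := by
      intro t s h0 hts i
      have hS0 : 0 ≤ S t i := by
        apply Finset.sum_nonneg; intro j _
        have : (0:ℝ) ≤ (A i j : ℝ) := by positivity
        nlinarith [h0 j]
      exact Real.rpow_le_rpow hS0 (hS_mono t s hts i) (by positivity)
    intro n
    induction n with
    | zero =>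
      refine ⟨fun i => le_refl 1, fun i => hm1, fun i => ?_⟩
      have := hF_ge (fun _ => 1) (fun _ => le_refl 1) i
      rw [hu_succ 0]
      simpa [hu] using this
    | succ k ih =>
      obtain ⟨h1, h2, h3⟩ := ih
      have h1' : ∀ i, 1 ≤ u (k + 1) i := by
        intro i; rw [hu_succ]; exact hF_ge (u k) h1 i
      have h2' : ∀ i, u (k + 1) i ≤ m := by
        intro i; rw [hu_succ]
        exact hF_le (u k) (fun j => (zero_le_one.trans (h1 j))) h2 i
      refine ⟨h1', h2', fun i => ?_⟩
      calc u (k + 1) i = F (u k) i := by rw [hu_succ]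
        _ ≤ F (u (k + 1)) i :=
            hF_mono (u k) (u (k + 1)) (fun j => zero_le_one.trans (h1 j)) h3 i
        _ = u (k + 2) i := by rw [hu_succ (k+1), hu_succ k]
  have hmono : ∀ i, Monotone fun n => u n i := by
    intro i
    exact monotone_nat_of_le_succ fun n => (key n).2.2 i
  have hbdd : ∀ i, BddAbove (Set.range fun n => u n i) := by
    intro i
    exact ⟨m, by rintro x ⟨n, rfl⟩; exact (key n).2.1 i⟩
  set t : Fin m → ℝ := fun i => ⨆ n, u n i with ht
  have htend : ∀ i, Filter.Tendsto (fun n => u n i) Filter.atTop (nhds (t i)) := by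
    intro i
    exact tendsto_atTop_ciSup (hmono i) (hbdd i)
  have ht1 : ∀ i, 1 ≤ t i := by
    intro i
    have := le_ciSup (hbdd i) 0
    simpa [hu] using this
  have heq : ∀ n i, (u (n + 1) i) ^ q = S (u n) i := by
    intro n i
    rw [hu_succ]
    exact hpowQ (S (u n) i) (le_trans zero_le_one (hS_ge_one (u n) ((key n).1) i))
  -- pass to the limit
  have hsol : ∀ i, t i ^ q = ∑ j, (A i j : ℝ) * t j := by
    intro i
    have hL : Filter.Tendsto (fun n => (u (n + 1) i) ^ q) Filter.atTop (nhds (t i ^ q)) := by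
      exact (((htend i).comp (Filter.tendsto_add_atTop_nat 1)).pow q)
    have hR : Filter.Tendsto (fun n => S (u n) i) Filter.atTop
        (nhds (∑ j, (A i j : ℝ) * t j)) := by
      apply tendsto_finset_sum
      intro j _
      exact tendsto_const_nhds.mul (htend j)
    have : (fun n => (u (n + 1) i) ^ q) = fun n => S (u n) i := funext fun n => heq n i
    rw [this] at hL
    exact tendsto_nhds_unique hL hR
  -- comparison lemma for uniqueness
  have hNe : Nonempty (Fin m) := ⟨⟨0, by omega⟩⟩
  have hcomp : ∀ a b : Fin m → ℝ, (∀ i, 0 < a i) →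
      (∀ i, a i ^ q = ∑ j, (A i j : ℝ) * a j) → (∀ i, 0 < b i) →
      (∀ i, b i ^ q = ∑ j, (A i j : ℝ) * b j) → ∀ i, a i ≤ b i := by
    intro a b ha hae hb hbe
    obtain ⟨i0, _, hc⟩ := Finset.exists_mem_eq_sup' (Finset.univ_nonempty)
      (fun i => a i / b i)
    set c : ℝ := Finset.univ.sup' Finset.univ_nonempty (fun i => a i / b i) with hcdef
    have hcpos : 0 < c := by
      rw [hc]; exact div_pos (ha i0) (hb i0)
    have hle : ∀ j, a j ≤ c * b j := by
      intro j
      have h1 : a j / b j ≤ c := by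
        rw [hcdef]; exact Finset.le_sup' (fun i => a i / b i) (Finset.mem_univ j)
      exact (div_le_iff₀ (hb j)).mp h1
    have hai0 : a i0 = c * b i0 := by
      rw [hc, div_mul_cancel₀ _ (ne_of_gt (hb i0))]
    have hkey : c ^ q * b i0 ^ q ≤ c * b i0 ^ q := by
      have h1 : a i0 ^ q ≤ c * b i0 ^ q := by
        rw [hae i0, hbe i0, Finset.mul_sum]
        apply Finset.sum_le_sum
        intro j _
        have h0 : (0:ℝ) ≤ (A i0 j : ℝ) := by positivity
        nlinarith [hle j]
      calc c ^ q * b i0 ^ q = (c * b i0) ^ q := by rw [mul_pow]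
        _ = a i0 ^ q := by rw [hai0]
        _ ≤ c * b i0 ^ q := h1
    have hcq : c ^ q ≤ c := by
      have hb0 : 0 < b i0 ^ q := pow_pos (hb i0) q
      nlinarith
    have hc1 : c ≤ 1 := by
      by_contra hc1
      push_neg at hc1
      have : c < c ^ q := by
        calc c = c ^ 1 := (pow_one c).symm
          _ < c ^ q := pow_lt_pow_right₀ hc1 hq1
      linarith
    intro i
    calc a i ≤ c * b i := hle i
      _ ≤ 1 * b i := by nlinarith [hb i]
      _ = b i := one_mul _
  refine ⟨t, ⟨fun i => lt_of_lt_of_le zero_lt_one (ht1 i), hsol⟩, ?_⟩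
  rintro s ⟨hs_pos, hs_eq⟩
  have h1 := hcomp s t hs_pos hs_eq (fun i => lt_of_lt_of_le zero_lt_one (ht1 i)) hsol
  have h2 := hcomp t s (fun i => lt_of_lt_of_le zero_lt_one (ht1 i)) hsol hs_pos hs_eq
  funext i
  exact le_antisymm (h1 i) (h2 i)
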